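/- Vanishing of H³ implies integrability of 2-cocycles: let μ₀ be a Lie bracket on ℂⁿ. Assume that every alternating trilinear map Ψ : ℂⁿ×ℂⁿ×ℂⁿ → ℂⁿ with δ³Ψ = 0 is of the form Ψ = δ²φ for some alternating bilinear map φ (i.e. H³(μ₀,μ₀) = 0). Then every alternating bilinear map φ₁ with δ²φ₁ = 0 is the infinitesimal part of a formal deformation of μ₀: there exists a sequence (φ_p)_{p≥2} of alternating bilinear maps such that, setting φ₀ = μ₀, for every p ≥ 0 one has Σ_{i+j=p, i,j≥0} φ_i ∘ φ_j = 0. -/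

import Mathlib

/-- A bilinear alternating (antisymmetric) map `ℂⁿ × ℂⁿ → ℂⁿ` (a 2-cochain). -/
def IsAltBilinearMap (n : ℕ) (φ : (Fin n → ℂ) → (Fin n → ℂ) → (Fin n → ℂ)) : Prop :=
  (∀ X X' Y, φ (X + X') Y = φ X Y + φ X' Y) ∧
  (∀ (c : ℂ) X Y, φ (c • X) Y = c • φ X Y) ∧
  (∀ X Y Y', φ X (Y + Y') = φ X Y + φ X Y') ∧
  (∀ (c : ℂ) X Y, φ X (c • Y) = c • φ X Y) ∧
  (∀ X Y, φ X Y = - φ Y X)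

/-- An alternating trilinear map `ℂⁿ × ℂⁿ × ℂⁿ → ℂⁿ` (a 3-cochain). -/
def IsAltTrilinearMap (n : ℕ) (Ψ : (Fin n → ℂ) → (Fin n → ℂ) → (Fin n → ℂ) → (Fin n → ℂ)) :
    Prop :=
  (∀ X X' Y Z, Ψ (X + X') Y Z = Ψ X Y Z + Ψ X' Y Z) ∧
  (∀ (c : ℂ) X Y Z, Ψ (c • X) Y Z = c • Ψ X Y Z) ∧
  (∀ X Y Y' Z, Ψ X (Y + Y') Z = Ψ X Y Z + Ψ X Y' Z) ∧
  (∀ (c : ℂ) X Y Z, Ψ X (c • Y) Z = c • Ψ X Y Z) ∧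
  (∀ X Y Z Z', Ψ X Y (Z + Z') = Ψ X Y Z + Ψ X Y Z') ∧
  (∀ (c : ℂ) X Y Z, Ψ X Y (c • Z) = c • Ψ X Y Z) ∧
  (∀ X Y Z, Ψ X Y Z = - Ψ Y X Z) ∧
  (∀ X Y Z, Ψ X Y Z = - Ψ X Z Y)

/-- The Gerstenhaber circle product of two 2-cochains:
`(φ ∘ ψ)(X,Y,Z) = φ(ψ(X,Y),Z) + φ(ψ(Y,Z),X) + φ(ψ(Z,X),Y)`. -/
def circProd (n : ℕ) (φ ψ : (Fin n → ℂ) → (Fin n → ℂ) → (Fin n → ℂ))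
    (X Y Z : Fin n → ℂ) : Fin n → ℂ :=
  φ (ψ X Y) Z + φ (ψ Y Z) X + φ (ψ Z X) Y

/-- The Chevalley coboundary `δ²φ = μ₀ ∘ φ + φ ∘ μ₀` of a 2-cochain. -/
def delta2 (n : ℕ) (μ₀ φ : (Fin n → ℂ) → (Fin n → ℂ) → (Fin n → ℂ))
    (X Y Z : Fin n → ℂ) : Fin n → ℂ :=
  circProd n μ₀ φ X Y Z + circProd n φ μ₀ X Y Z

/-- The Chevalley coboundary `δ³Ψ` of a 3-cochain `Ψ` with respect to the bracket `μ₀`. -/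
def delta3 (n : ℕ) (μ₀ : (Fin n → ℂ) → (Fin n → ℂ) → (Fin n → ℂ))
    (Ψ : (Fin n → ℂ) → (Fin n → ℂ) → (Fin n → ℂ) → (Fin n → ℂ))
    (Y₁ Y₂ Y₃ Y₄ : Fin n → ℂ) : Fin n → ℂ :=
  μ₀ Y₁ (Ψ Y₂ Y₃ Y₄) - μ₀ Y₂ (Ψ Y₁ Y₃ Y₄) + μ₀ Y₃ (Ψ Y₁ Y₂ Y₄) - μ₀ Y₄ (Ψ Y₁ Y₂ Y₃)
    - Ψ (μ₀ Y₁ Y₂) Y₃ Y₄ + Ψ (μ₀ Y₁ Y₃) Y₂ Y₄ - Ψ (μ₀ Y₁ Y₄) Y₂ Y₃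
    - Ψ (μ₀ Y₂ Y₃) Y₁ Y₄ + Ψ (μ₀ Y₂ Y₄) Y₁ Y₃ - Ψ (μ₀ Y₃ Y₄) Y₁ Y₂

lemma ab_negL {n : ℕ} {a : (Fin n → ℂ) → (Fin n → ℂ) → (Fin n → ℂ)}
    (ha : IsAltBilinearMap n a) : ∀ U V, a (-U) V = -(a U V) := by
  intro U V; rw [← neg_one_smul ℂ U, ha.2.1, neg_one_smul]

lemma ab_negR {n : ℕ} {a : (Fin n → ℂ) → (Fin n → ℂ) → (Fin n → ℂ)}
    (ha : IsAltBilinearMap n a) : ∀ U V, a U (-V) = -(a U V) := by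
  intro U V; rw [← neg_one_smul ℂ V, ha.2.2.2.1, neg_one_smul]

lemma bigJ {n : ℕ} {a b c : (Fin n → ℂ) → (Fin n → ℂ) → (Fin n → ℂ)}
    (ha : IsAltBilinearMap n a) (hb : IsAltBilinearMap n b) (hc : IsAltBilinearMap n c)
    (Y1 Y2 Y3 Y4 : Fin n → ℂ) :
    delta3 n a (fun X Y Z => circProd n b c X Y Z + circProd n c b X Y Z) Y1 Y2 Y3 Y4
    + delta3 n b (fun X Y Z => circProd n c a X Y Z + circProd n a c X Y Z) Y1 Y2 Y3 Y4
    + delta3 n c (fun X Y Z => circProd n a b X Y Z + circProd n b a X Y Z) Y1 Y2 Y3 Y4 = 0 := by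
  have hAa := ha.2.2.2.2
  have hAb := hb.2.2.2.2
  have hAc := hc.2.2.2.2
  simp only [delta3, circProd, ha.2.2.1, hb.2.2.1, hc.2.2.1,
    ab_negL ha, ab_negR ha, ab_negL hb, ab_negR hb, ab_negL hc, ab_negR hc,
hAa Y3 Y1, hAa Y4 Y1, hAa Y4 Y2, hAa (b Y1 Y2) Y3, hAa (b Y1 Y2) Y4, hAa (b Y1 Y3) Y2, hAa (b
Y1 Y3) Y4, hAa (b Y1 Y4) Y2, hAa (b Y1 Y4) Y3, hAa (b Y1 (c Y2 Y3)) Y4, hAa (b Y1 (c Y2 Y4))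
Y3, hAa (b Y1 (c Y3 Y4)) Y2, hAa (b Y2 Y3) Y1, hAa (b Y2 Y3) Y4, hAa (b Y2 Y4) Y1, hAa (b Y2
Y4) Y3, hAa (b Y2 (c Y1 Y3)) Y4, hAa (b Y2 (c Y1 Y4)) Y3, hAa (b Y2 (c Y3 Y4)) Y1, hAa (b Y3
Y4) Y1, hAa (b Y3 Y4) Y2, hAa (b Y3 (c Y1 Y2)) Y4, hAa (b Y3 (c Y1 Y4)) Y2, hAa (b Y3 (c Y2
Y4)) Y1, hAa (b Y4 (c Y1 Y2)) Y3, hAa (b Y4 (c Y1 Y3)) Y2, hAa (b Y4 (c Y2 Y3)) Y1, hAa (c Y1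
Y2) Y3, hAa (c Y1 Y2) Y4, hAa (c Y1 Y2) (b Y3 Y4), hAa (c Y1 Y3) Y2, hAa (c Y1 Y3) Y4, hAa (c
Y1 Y3) (b Y2 Y4), hAa (c Y1 Y4) Y2, hAa (c Y1 Y4) Y3, hAa (c Y1 Y4) (b Y2 Y3), hAa (c Y1 (b Y2
Y3)) Y4, hAa (c Y1 (b Y2 Y4)) Y3, hAa (c Y1 (b Y3 Y4)) Y2, hAa (c Y2 Y3) Y1, hAa (c Y2 Y3) Y4,
hAa (c Y2 Y3) (b Y1 Y4), hAa (c Y2 Y4) Y1, hAa (c Y2 Y4) Y3, hAa (c Y2 Y4) (b Y1 Y3), hAa (c Y2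
(b Y1 Y3)) Y4, hAa (c Y2 (b Y1 Y4)) Y3, hAa (c Y2 (b Y3 Y4)) Y1, hAa (c Y3 Y4) Y1, hAa (c Y3
Y4) Y2, hAa (c Y3 Y4) (b Y1 Y2), hAa (c Y3 (b Y1 Y2)) Y4, hAa (c Y3 (b Y1 Y4)) Y2, hAa (c Y3 (b
Y2 Y4)) Y1, hAa (c Y4 (b Y1 Y2)) Y3, hAa (c Y4 (b Y1 Y3)) Y2, hAa (c Y4 (b Y2 Y3)) Y1, hAb Y3
Y1, hAb Y4 Y1, hAb Y4 Y2, hAb (a Y1 Y2) Y3, hAb (a Y1 Y2) Y4, hAb (a Y1 Y3) Y2, hAb (a Y1 Y3)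
Y4, hAb (a Y1 Y4) Y2, hAb (a Y1 Y4) Y3, hAb (a Y1 (c Y2 Y3)) Y4, hAb (a Y1 (c Y2 Y4)) Y3, hAb
(a Y1 (c Y3 Y4)) Y2, hAb (a Y2 Y3) Y1, hAb (a Y2 Y3) Y4, hAb (a Y2 Y4) Y1, hAb (a Y2 Y4) Y3,
hAb (a Y2 (c Y1 Y3)) Y4, hAb (a Y2 (c Y1 Y4)) Y3, hAb (a Y2 (c Y3 Y4)) Y1, hAb (a Y3 Y4) Y1,
hAb (a Y3 Y4) Y2, hAb (a Y3 (c Y1 Y2)) Y4, hAb (a Y3 (c Y1 Y4)) Y2, hAb (a Y3 (c Y2 Y4)) Y1,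
hAb (a Y4 (c Y1 Y2)) Y3, hAb (a Y4 (c Y1 Y3)) Y2, hAb (a Y4 (c Y2 Y3)) Y1, hAb (c Y1 Y2) Y3,
hAb (c Y1 Y2) Y4, hAb (c Y1 Y2) (a Y3 Y4), hAb (c Y1 Y3) Y2, hAb (c Y1 Y3) Y4, hAb (c Y1 Y3) (a
Y2 Y4), hAb (c Y1 Y4) Y2, hAb (c Y1 Y4) Y3, hAb (c Y1 Y4) (a Y2 Y3), hAb (c Y1 (a Y2 Y3)) Y4,
hAb (c Y1 (a Y2 Y4)) Y3, hAb (c Y1 (a Y3 Y4)) Y2, hAb (c Y2 Y3) Y1, hAb (c Y2 Y3) Y4, hAb (c Y2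
Y3) (a Y1 Y4), hAb (c Y2 Y4) Y1, hAb (c Y2 Y4) Y3, hAb (c Y2 Y4) (a Y1 Y3), hAb (c Y2 (a Y1
Y3)) Y4, hAb (c Y2 (a Y1 Y4)) Y3, hAb (c Y2 (a Y3 Y4)) Y1, hAb (c Y3 Y4) Y1, hAb (c Y3 Y4) Y2,
hAb (c Y3 Y4) (a Y1 Y2), hAb (c Y3 (a Y1 Y2)) Y4, hAb (c Y3 (a Y1 Y4)) Y2, hAb (c Y3 (a Y2 Y4))
Y1, hAb (c Y4 (a Y1 Y2)) Y3, hAb (c Y4 (a Y1 Y3)) Y2, hAb (c Y4 (a Y2 Y3)) Y1, hAc Y3 Y1, hAc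
Y4 Y1, hAc Y4 Y2, hAc (a Y1 Y2) Y3, hAc (a Y1 Y2) Y4, hAc (a Y1 Y3) Y2, hAc (a Y1 Y3) Y4, hAc
(a Y1 Y4) Y2, hAc (a Y1 Y4) Y3, hAc (a Y1 (b Y2 Y3)) Y4, hAc (a Y1 (b Y2 Y4)) Y3, hAc (a Y1 (b
Y3 Y4)) Y2, hAc (a Y2 Y3) Y1, hAc (a Y2 Y3) Y4, hAc (a Y2 Y4) Y1, hAc (a Y2 Y4) Y3, hAc (a Y2
(b Y1 Y3)) Y4, hAc (a Y2 (b Y1 Y4)) Y3, hAc (a Y2 (b Y3 Y4)) Y1, hAc (a Y3 Y4) Y1, hAc (a Y3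
Y4) Y2, hAc (a Y3 (b Y1 Y2)) Y4, hAc (a Y3 (b Y1 Y4)) Y2, hAc (a Y3 (b Y2 Y4)) Y1, hAc (a Y4 (b
Y1 Y2)) Y3, hAc (a Y4 (b Y1 Y3)) Y2, hAc (a Y4 (b Y2 Y3)) Y1, hAc (b Y1 Y2) Y3, hAc (b Y1 Y2)
Y4, hAc (b Y1 Y2) (a Y3 Y4), hAc (b Y1 Y3) Y2, hAc (b Y1 Y3) Y4, hAc (b Y1 Y3) (a Y2 Y4), hAc
(b Y1 Y4) Y2, hAc (b Y1 Y4) Y3, hAc (b Y1 Y4) (a Y2 Y3), hAc (b Y1 (a Y2 Y3)) Y4, hAc (b Y1 (a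
Y2 Y4)) Y3, hAc (b Y1 (a Y3 Y4)) Y2, hAc (b Y2 Y3) Y1, hAc (b Y2 Y3) Y4, hAc (b Y2 Y3) (a Y1
Y4), hAc (b Y2 Y4) Y1, hAc (b Y2 Y4) Y3, hAc (b Y2 Y4) (a Y1 Y3), hAc (b Y2 (a Y1 Y3)) Y4, hAc
(b Y2 (a Y1 Y4)) Y3, hAc (b Y2 (a Y3 Y4)) Y1, hAc (b Y3 Y4) Y1, hAc (b Y3 Y4) Y2, hAc (b Y3 Y4)
(a Y1 Y2), hAc (b Y3 (a Y1 Y2)) Y4, hAc (b Y3 (a Y1 Y4)) Y2, hAc (b Y3 (a Y2 Y4)) Y1, hAc (b Y4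
(a Y1 Y2)) Y3, hAc (b Y4 (a Y1 Y3)) Y2, hAc (b Y4 (a Y2 Y3)) Y1
    ]
  abel

section Aux
variable {n : ℕ}

lemma ab_zeroL {a : (Fin n → ℂ) → (Fin n → ℂ) → (Fin n → ℂ)}
    (ha : IsAltBilinearMap n a) : ∀ V, a 0 V = 0 := by
  intro V
  have h := ha.1 0 0 V
  rw [add_zero] at h
  exact (left_eq_add.mp h)

lemma ab_zeroR {a : (Fin n → ℂ) → (Fin n → ℂ) → (Fin n → ℂ)}
    (ha : IsAltBilinearMap n a) : ∀ U, a U 0 = 0 := by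
  intro U
  have h := ha.2.2.1 U 0 0
  rw [add_zero] at h
  exact (left_eq_add.mp h)

lemma delta3_ext {x : (Fin n → ℂ) → (Fin n → ℂ) → (Fin n → ℂ)}
    {Ψ Θ : (Fin n → ℂ) → (Fin n → ℂ) → (Fin n → ℂ) → (Fin n → ℂ)}
    (h : ∀ X Y Z, Ψ X Y Z = Θ X Y Z) (Y1 Y2 Y3 Y4 : Fin n → ℂ) :
    delta3 n x Ψ Y1 Y2 Y3 Y4 = delta3 n x Θ Y1 Y2 Y3 Y4 := by
  simp only [delta3, h]

lemma delta3_add {x : (Fin n → ℂ) → (Fin n → ℂ) → (Fin n → ℂ)}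
    (hx : IsAltBilinearMap n x)
    (Ψ Θ : (Fin n → ℂ) → (Fin n → ℂ) → (Fin n → ℂ) → (Fin n → ℂ))
    (Y1 Y2 Y3 Y4 : Fin n → ℂ) :
    delta3 n x (fun X Y Z => Ψ X Y Z + Θ X Y Z) Y1 Y2 Y3 Y4
      = delta3 n x Ψ Y1 Y2 Y3 Y4 + delta3 n x Θ Y1 Y2 Y3 Y4 := by
  simp only [delta3, hx.2.2.1]
  abel

lemma delta3_neg {x : (Fin n → ℂ) → (Fin n → ℂ) → (Fin n → ℂ)}
    (hx : IsAltBilinearMap n x)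
    (Ψ : (Fin n → ℂ) → (Fin n → ℂ) → (Fin n → ℂ) → (Fin n → ℂ))
    (Y1 Y2 Y3 Y4 : Fin n → ℂ) :
    delta3 n x (fun X Y Z => -(Ψ X Y Z)) Y1 Y2 Y3 Y4 = -delta3 n x Ψ Y1 Y2 Y3 Y4 := by
  simp only [delta3, ab_negR hx]
  abel

lemma delta3_zero {x : (Fin n → ℂ) → (Fin n → ℂ) → (Fin n → ℂ)}
    (hx : IsAltBilinearMap n x) (Y1 Y2 Y3 Y4 : Fin n → ℂ) :
    delta3 n x (fun _ _ _ => (0 : Fin n → ℂ)) Y1 Y2 Y3 Y4 = 0 := by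
  simp only [delta3, ab_zeroR hx]
  abel

lemma delta3_sum {ι : Type*} {x : (Fin n → ℂ) → (Fin n → ℂ) → (Fin n → ℂ)}
    (hx : IsAltBilinearMap n x) (s : Finset ι)
    (F : ι → (Fin n → ℂ) → (Fin n → ℂ) → (Fin n → ℂ) → (Fin n → ℂ))
    (Y1 Y2 Y3 Y4 : Fin n → ℂ) :
    delta3 n x (fun X Y Z => ∑ i ∈ s, F i X Y Z) Y1 Y2 Y3 Y4
      = ∑ i ∈ s, delta3 n x (F i) Y1 Y2 Y3 Y4 := by
  induction s using Finset.cons_induction with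
  | empty =>
      rw [Finset.sum_empty, delta3_ext (Θ := fun _ _ _ => (0 : Fin n → ℂ))
        (fun X Y Z => by rw [Finset.sum_empty]), delta3_zero hx]
  | cons a s ha ih =>
      rw [Finset.sum_cons,
        delta3_ext (Θ := fun X Y Z => F a X Y Z + ∑ i ∈ s, F i X Y Z)
          (fun X Y Z => by rw [Finset.sum_cons]),
        delta3_add hx, ih]

lemma altTri_circProd {φ ψ : (Fin n → ℂ) → (Fin n → ℂ) → (Fin n → ℂ)}
    (hφ : IsAltBilinearMap n φ) (hψ : IsAltBilinearMap n ψ) :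
    IsAltTrilinearMap n (fun X Y Z => circProd n φ ψ X Y Z) := by
  have hψA := hψ.2.2.2.2
  refine ⟨?_, ?_, ?_, ?_, ?_, ?_, ?_, ?_⟩
  · intro X X' Y Z
    simp only [circProd, hψ.1, hψ.2.2.1, hφ.1, hφ.2.2.1]
    abel
  · intro c X Y Z
    simp only [circProd, hψ.2.1, hψ.2.2.2.1, hφ.2.1, hφ.2.2.2.1, smul_add]
  · intro X Y Y' Z
    simp only [circProd, hψ.1, hψ.2.2.1, hφ.1, hφ.2.2.1]
    abel
  · intro c X Y Z
    simp only [circProd, hψ.2.1, hψ.2.2.2.1, hφ.2.1, hφ.2.2.2.1, smul_add]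
  · intro X Y Z Z'
    simp only [circProd, hψ.1, hψ.2.2.1, hφ.1, hφ.2.2.1]
    abel
  · intro c X Y Z
    simp only [circProd, hψ.2.1, hψ.2.2.2.1, hφ.2.1, hφ.2.2.2.1, smul_add]
  · intro X Y Z
    simp only [circProd, hψA Y X, hψA X Z, hψA Z Y, ab_negL hφ]
    abel
  · intro X Y Z
    simp only [circProd, hψA Y X, hψA X Z, hψA Z Y, ab_negL hφ]
    abel

lemma altTri_neg {Ψ : (Fin n → ℂ) → (Fin n → ℂ) → (Fin n → ℂ) → (Fin n → ℂ)}
    (h : IsAltTrilinearMap n Ψ) :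
    IsAltTrilinearMap n (fun X Y Z => -(Ψ X Y Z)) := by
  refine ⟨?_, ?_, ?_, ?_, ?_, ?_, ?_, ?_⟩
  · intro X X' Y Z; show -(Ψ (X + X') Y Z) = -(Ψ X Y Z) + -(Ψ X' Y Z); rw [h.1]; abel
  · intro c X Y Z; show -(Ψ (c • X) Y Z) = c • -(Ψ X Y Z); rw [h.2.1, smul_neg]
  · intro X Y Y' Z; show -(Ψ X (Y + Y') Z) = -(Ψ X Y Z) + -(Ψ X Y' Z); rw [h.2.2.1]; abel
  · intro c X Y Z; show -(Ψ X (c • Y) Z) = c • -(Ψ X Y Z); rw [h.2.2.2.1, smul_neg]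
  · intro X Y Z Z'; show -(Ψ X Y (Z + Z')) = -(Ψ X Y Z) + -(Ψ X Y Z'); rw [h.2.2.2.2.1]; abel
  · intro c X Y Z; show -(Ψ X Y (c • Z)) = c • -(Ψ X Y Z); rw [h.2.2.2.2.2.1, smul_neg]
  · intro X Y Z; show -(Ψ X Y Z) = -(-(Ψ Y X Z)); rw [← h.2.2.2.2.2.2.1 X Y Z]
  · intro X Y Z; show -(Ψ X Y Z) = -(-(Ψ X Z Y)); rw [← h.2.2.2.2.2.2.2 X Y Z]

lemma altTri_sum {ι : Type*} (s : Finset ι)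
    (F : ι → (Fin n → ℂ) → (Fin n → ℂ) → (Fin n → ℂ) → (Fin n → ℂ))
    (h : ∀ i ∈ s, IsAltTrilinearMap n (F i)) :
    IsAltTrilinearMap n (fun X Y Z => ∑ i ∈ s, F i X Y Z) := by
  refine ⟨?_, ?_, ?_, ?_, ?_, ?_, ?_, ?_⟩
  · intro X X' Y Z
    show ∑ i ∈ s, F i (X + X') Y Z = (∑ i ∈ s, F i X Y Z) + ∑ i ∈ s, F i X' Y Z
    rw [← Finset.sum_add_distrib]
    exact Finset.sum_congr rfl fun i hi => (h i hi).1 X X' Y Z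
  · intro c X Y Z
    show ∑ i ∈ s, F i (c • X) Y Z = c • ∑ i ∈ s, F i X Y Z
    rw [Finset.smul_sum]
    exact Finset.sum_congr rfl fun i hi => (h i hi).2.1 c X Y Z
  · intro X Y Y' Z
    show ∑ i ∈ s, F i X (Y + Y') Z = (∑ i ∈ s, F i X Y Z) + ∑ i ∈ s, F i X Y' Z
    rw [← Finset.sum_add_distrib]
    exact Finset.sum_congr rfl fun i hi => (h i hi).2.2.1 X Y Y' Z
  · intro c X Y Z
    show ∑ i ∈ s, F i X (c • Y) Z = c • ∑ i ∈ s, F i X Y Z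
    rw [Finset.smul_sum]
    exact Finset.sum_congr rfl fun i hi => (h i hi).2.2.2.1 c X Y Z
  · intro X Y Z Z'
    show ∑ i ∈ s, F i X Y (Z + Z') = (∑ i ∈ s, F i X Y Z) + ∑ i ∈ s, F i X Y Z'
    rw [← Finset.sum_add_distrib]
    exact Finset.sum_congr rfl fun i hi => (h i hi).2.2.2.2.1 X Y Z Z'
  · intro c X Y Z
    show ∑ i ∈ s, F i X Y (c • Z) = c • ∑ i ∈ s, F i X Y Z
    rw [Finset.smul_sum]
    exact Finset.sum_congr rfl fun i hi => (h i hi).2.2.2.2.2.1 c X Y Z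
  · intro X Y Z
    show ∑ i ∈ s, F i X Y Z = -∑ i ∈ s, F i Y X Z
    rw [← Finset.sum_neg_distrib]
    exact Finset.sum_congr rfl fun i hi => (h i hi).2.2.2.2.2.2.1 X Y Z
  · intro X Y Z
    show ∑ i ∈ s, F i X Y Z = -∑ i ∈ s, F i X Z Y
    rw [← Finset.sum_neg_distrib]
    exact Finset.sum_congr rfl fun i hi => (h i hi).2.2.2.2.2.2.2 X Y Z

end Aux

section Comb

/-- Index set `{(i,j) : i+j = P, i,j ≥ 1}`. -/
def Sd (P : ℕ) : Finset (ℕ × ℕ) :=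
  (Finset.HasAntidiagonal.antidiagonal P).filter fun ij => 0 < ij.1 ∧ 0 < ij.2

/-- Index set `{(i,a,b) : i+a+b = P, i,a,b ≥ 1}`. -/
def Td (P : ℕ) : Finset (ℕ × ℕ × ℕ) :=
  ((Finset.range (P+1)) ×ˢ (Finset.range (P+1)) ×ˢ (Finset.range (P+1))).filter
    fun t => t.1 + t.2.1 + t.2.2 = P ∧ 0 < t.1 ∧ 0 < t.2.1 ∧ 0 < t.2.2

lemma mem_Sd {P : ℕ} {ij : ℕ × ℕ} :
    ij ∈ Sd P ↔ ij.1 + ij.2 = P ∧ 0 < ij.1 ∧ 0 < ij.2 := by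
  simp [Sd, Finset.mem_filter, Finset.HasAntidiagonal.mem_antidiagonal]

lemma mem_Td {P : ℕ} {t : ℕ × ℕ × ℕ} :
    t ∈ Td P ↔ t.1 + t.2.1 + t.2.2 = P ∧ 0 < t.1 ∧ 0 < t.2.1 ∧ 0 < t.2.2 := by
  simp only [Td, Finset.mem_filter, Finset.mem_product, Finset.mem_range]
  constructor
  · rintro ⟨-, h⟩; exact h
  · rintro ⟨h1, h2, h3, h4⟩; exact ⟨⟨by omega, by omega, by omega⟩, h1, h2, h3, h4⟩

lemma antidiagonal_split (P : ℕ) (hP : 1 ≤ P) :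
    Finset.HasAntidiagonal.antidiagonal P = insert ((0:ℕ), P) (insert (P, 0) (Sd P)) := by
  ext ij
  simp only [Finset.HasAntidiagonal.mem_antidiagonal, Finset.mem_insert, mem_Sd, Prod.ext_iff]
  obtain ⟨i, j⟩ := ij
  simp only
  omega

lemma notmem_split1 (P : ℕ) (hP : 1 ≤ P) : ((0:ℕ), P) ∉ insert ((P:ℕ), 0) (Sd P) := by
  simp only [Finset.mem_insert, mem_Sd, Prod.ext_iff]
  omega

lemma notmem_split2 (P : ℕ) : ((P:ℕ), (0:ℕ)) ∉ Sd P := by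
  simp only [mem_Sd]
  omega

lemma sum_Sd_swap {M : Type*} [AddCommMonoid M] (P : ℕ) (f : ℕ → ℕ → M) :
    ∑ ij ∈ Sd P, f ij.1 ij.2 = ∑ ij ∈ Sd P, f ij.2 ij.1 := by
  refine Finset.sum_nbij' (fun ij => (ij.2, ij.1)) (fun ij => (ij.2, ij.1)) ?_ ?_ ?_ ?_ ?_
  · intro a ha; simp only [mem_Sd] at ha ⊢; omega
  · intro a ha; simp only [mem_Sd] at ha ⊢; omega
  · intro a _; rfl
  · intro a _; rfl
  · intro a _; rfl

lemma sum_Sd_sigma {M : Type*} [AddCommMonoid M] (P : ℕ) (f : ℕ → ℕ → ℕ → M) :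
    ∑ ij ∈ Sd P, ∑ ab ∈ Sd ij.2, f ij.1 ab.1 ab.2 = ∑ t ∈ Td P, f t.1 t.2.1 t.2.2 := by
  rw [Finset.sum_sigma']
  refine Finset.sum_nbij' (fun x => (x.1.1, x.2.1, x.2.2))
    (fun t => ⟨(t.1, t.2.1 + t.2.2), (t.2.1, t.2.2)⟩) ?_ ?_ ?_ ?_ ?_
  · rintro ⟨⟨i, j⟩, ⟨a', b'⟩⟩ ha
    rw [Finset.mem_sigma] at ha
    obtain ⟨h1, h2⟩ := ha
    rw [mem_Sd] at h1 h2
    rw [mem_Td]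
    simp only at h1 h2 ⊢
    omega
  · rintro ⟨i, a', b'⟩ ht
    rw [mem_Td] at ht
    obtain ⟨h1, h2, h3, h4⟩ := ht
    rw [Finset.mem_sigma, mem_Sd, mem_Sd]
    show (i + (a' + b') = P ∧ 0 < i ∧ 0 < a' + b') ∧ (a' + b' = a' + b' ∧ 0 < a' ∧ 0 < b')
    simp only at h1 h2 h3 h4
    omega
  · rintro ⟨⟨i, j⟩, ⟨a', b'⟩⟩ ha
    rw [Finset.mem_sigma] at ha
    obtain ⟨h1, h2⟩ := ha
    rw [mem_Sd] at h1 h2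
    simp only at h1 h2 ⊢
    have hj : a' + b' = j := by omega
    rw [hj]
  · rintro ⟨i, a', b'⟩ _; rfl
  · rintro ⟨⟨i, j⟩, ⟨a', b'⟩⟩ _; rfl

lemma sum_Td_cyc {M : Type*} [AddCommMonoid M] (P : ℕ) (g : ℕ → ℕ → ℕ → M) :
    ∑ t ∈ Td P, g t.1 t.2.1 t.2.2 = ∑ t ∈ Td P, g t.2.1 t.2.2 t.1 := by
  refine Finset.sum_nbij' (fun t => (t.2.2, t.1, t.2.1)) (fun t => (t.2.1, t.2.2, t.1))
    ?_ ?_ ?_ ?_ ?_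
  · intro a ha; simp only [mem_Td] at ha ⊢; omega
  · intro a ha; simp only [mem_Td] at ha ⊢; omega
  · intro a _; rfl
  · intro a _; rfl
  · intro a _; rfl

lemma sum_Td_swap23 {M : Type*} [AddCommMonoid M] (P : ℕ) (g : ℕ → ℕ → ℕ → M) :
    ∑ t ∈ Td P, g t.1 t.2.1 t.2.2 = ∑ t ∈ Td P, g t.1 t.2.2 t.2.1 := by
  refine Finset.sum_nbij' (fun t => (t.1, t.2.2, t.2.1)) (fun t => (t.1, t.2.2, t.2.1))
    ?_ ?_ ?_ ?_ ?_
  · intro a ha; simp only [mem_Td] at ha ⊢; omega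
  · intro a ha; simp only [mem_Td] at ha ⊢; omega
  · intro a _; rfl
  · intro a _; rfl
  · intro a _; rfl

lemma smul_cancel {n : ℕ} {k : ℂ} (hk : k ≠ 0) {v : Fin n → ℂ} (h : k • v = 0) : v = 0 := by
  rcases smul_eq_zero.mp h with h' | h'
  · exact absurd h' hk
  · exact h'

lemma two_cancel {n : ℕ} {v : Fin n → ℂ} (h : v + v = 0) : v = 0 := by
  refine smul_cancel (two_ne_zero) ?_
  rw [two_smul]; exact h

lemma three_cancel {n : ℕ} {v : Fin n → ℂ} (h : v + v + v = 0) : v = 0 := by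
  refine smul_cancel (three_ne_zero) ?_
  rw [show (3:ℂ) = 1 + 1 + 1 by norm_num, add_smul, add_smul, one_smul]
  exact h

end Comb

section Construction
attribute [local instance] Classical.propDecidable

variable (n : ℕ) (μ₀ φ₁ : (Fin n → ℂ) → (Fin n → ℂ) → (Fin n → ℂ))

/-- The obstruction 3-cochain built from previously constructed terms. -/
noncomputable def nextPsi (prev : ℕ → (Fin n → ℂ) → (Fin n → ℂ) → (Fin n → ℂ)) (P : ℕ) :
    (Fin n → ℂ) → (Fin n → ℂ) → (Fin n → ℂ) → (Fin n → ℂ) :=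
  fun X Y Z => -∑ ij ∈ Sd P, circProd n (prev ij.1) (prev ij.2) X Y Z

variable (hH3 : ∀ Ψ, IsAltTrilinearMap n Ψ →
      (∀ Y₁ Y₂ Y₃ Y₄, delta3 n μ₀ Ψ Y₁ Y₂ Y₃ Y₄ = 0) →
      ∃ φ, IsAltBilinearMap n φ ∧ ∀ X Y Z, Ψ X Y Z = delta2 n μ₀ φ X Y Z)

/-- One step of the construction: solve `δ²φ_P = Ψ_P` if possible. -/
noncomputable def stepMap (prev : ℕ → (Fin n → ℂ) → (Fin n → ℂ) → (Fin n → ℂ)) (P : ℕ) :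
    (Fin n → ℂ) → (Fin n → ℂ) → (Fin n → ℂ) :=
  if h : IsAltTrilinearMap n (nextPsi n prev P) ∧
      (∀ Y₁ Y₂ Y₃ Y₄, delta3 n μ₀ (nextPsi n prev P) Y₁ Y₂ Y₃ Y₄ = 0)
  then (hH3 (nextPsi n prev P) h.1 h.2).choose
  else fun _ _ => 0

lemma stepMap_eq (prev : ℕ → (Fin n → ℂ) → (Fin n → ℂ) → (Fin n → ℂ)) (P : ℕ)
    (h : IsAltTrilinearMap n (nextPsi n prev P) ∧
      (∀ Y₁ Y₂ Y₃ Y₄, delta3 n μ₀ (nextPsi n prev P) Y₁ Y₂ Y₃ Y₄ = 0)) :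
    stepMap n μ₀ hH3 prev P = (hH3 (nextPsi n prev P) h.1 h.2).choose :=
  dif_pos h

/-- Initial segments of the deformation sequence. -/
noncomputable def seg : ℕ → ℕ → (Fin n → ℂ) → (Fin n → ℂ) → (Fin n → ℂ)
  | 0 => fun q => if q = 0 then μ₀ else fun _ _ => 0
  | 1 => fun q => if q = 0 then μ₀ else if q = 1 then φ₁ else fun _ _ => 0
  | (p+2) => Function.update (seg (p+1)) (p+2) (stepMap n μ₀ hH3 (seg (p+1)) (p+2))

/-- The deformation sequence. -/
noncomputable def phiN (q : ℕ) : (Fin n → ℂ) → (Fin n → ℂ) → (Fin n → ℂ) :=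
  seg n μ₀ φ₁ hH3 q q

lemma seg_eval : ∀ p q, q ≤ p → seg n μ₀ φ₁ hH3 p q = phiN n μ₀ φ₁ hH3 q := by
  intro p
  induction p with
  | zero =>
      intro q hq
      have : q = 0 := Nat.le_zero.mp hq
      subst this; rfl
  | succ p ih =>
      intro q hq
      rcases Nat.lt_or_ge q (p+1) with h | h
      · have hq' : q ≤ p := by omega
        cases p with
        | zero =>
            have : q = 0 := by omega
            subst this; rfl
        | succ p' =>
            have hseg : seg n μ₀ φ₁ hH3 (p'+2)
                = Function.update (seg n μ₀ φ₁ hH3 (p'+1)) (p'+2)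
                    (stepMap n μ₀ hH3 (seg n μ₀ φ₁ hH3 (p'+1)) (p'+2)) := rfl
            rw [hseg, Function.update_of_ne (by omega)]
            exact ih q hq'
      · have : q = p+1 := by omega
        subst this; rfl

lemma phiN_step (p : ℕ) :
    phiN n μ₀ φ₁ hH3 (p+2) = stepMap n μ₀ hH3 (seg n μ₀ φ₁ hH3 (p+1)) (p+2) := by
  show seg n μ₀ φ₁ hH3 (p+2) (p+2) = _
  have hseg : seg n μ₀ φ₁ hH3 (p+2)
      = Function.update (seg n μ₀ φ₁ hH3 (p+1)) (p+2)
          (stepMap n μ₀ hH3 (seg n μ₀ φ₁ hH3 (p+1)) (p+2)) := rfl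
  rw [hseg, Function.update_self]

end Construction

/-- **Vanishing of `H³` implies integrability of 2-cocycles.**
Let `μ₀` be a Lie bracket on `ℂⁿ` such that every alternating trilinear `δ³`-cocycle is a
`δ²`-coboundary (`H³(μ₀,μ₀) = 0`).  Then every 2-cocycle `φ₁` is the infinitesimal part of a
formal deformation of `μ₀`: there is a sequence `(φ_p)` with `φ_0 = μ₀`, `φ_1 = φ₁`, each
`φ_p` alternating bilinear, satisfying `Σ_{i+j=p} φ_i ∘ φ_j = 0` for every `p ≥ 0`. -/
theorem integrable_of_H3_eq_zero
    (n : ℕ) (μ₀ : (Fin n → ℂ) → (Fin n → ℂ) → (Fin n → ℂ))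
    (hμ₀ : IsAltBilinearMap n μ₀)
    (hμ₀jac : ∀ X Y Z, μ₀ X (μ₀ Y Z) + μ₀ Y (μ₀ Z X) + μ₀ Z (μ₀ X Y) = 0)
    (hH3 : ∀ Ψ, IsAltTrilinearMap n Ψ →
      (∀ Y₁ Y₂ Y₃ Y₄, delta3 n μ₀ Ψ Y₁ Y₂ Y₃ Y₄ = 0) →
      ∃ φ, IsAltBilinearMap n φ ∧ ∀ X Y Z, Ψ X Y Z = delta2 n μ₀ φ X Y Z)
    (φ₁ : (Fin n → ℂ) → (Fin n → ℂ) → (Fin n → ℂ))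
    (hφ₁ : IsAltBilinearMap n φ₁)
    (hcocycle : ∀ X Y Z, delta2 n μ₀ φ₁ X Y Z = 0) :
    ∃ φ : ℕ → ((Fin n → ℂ) → (Fin n → ℂ) → (Fin n → ℂ)),
      φ 0 = μ₀ ∧ φ 1 = φ₁ ∧ (∀ p, IsAltBilinearMap n (φ p)) ∧
      ∀ p : ℕ, ∀ X Y Z,
        ∑ ij ∈ Finset.HasAntidiagonal.antidiagonal p, circProd n (φ ij.1) (φ ij.2) X Y Z = 0 := by
  classical
  set φ : ℕ → ((Fin n → ℂ) → (Fin n → ℂ) → (Fin n → ℂ)) := phiN n μ₀ φ₁ hH3 with hφdef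
  have hph0 : φ 0 = μ₀ := rfl
  have hph1 : φ 1 = φ₁ := rfl
  have key : ∀ p, IsAltBilinearMap n (φ p) ∧
      (∀ X Y Z, ∑ ij ∈ Finset.HasAntidiagonal.antidiagonal p, circProd n (φ ij.1) (φ ij.2) X Y Z = 0) := by
    intro p
    induction p using Nat.strong_induction_on with
    | _ p ih =>
    rcases (show p = 0 ∨ p = 1 ∨ ∃ q, p = q + 2 by
      rcases p with _ | _ | q
      exacts [Or.inl rfl, Or.inr (Or.inl rfl), Or.inr (Or.inr ⟨q, rfl⟩)]) with rfl | rfl | ⟨q, rfl⟩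
    · constructor
      · rw [hph0]; exact hμ₀
      · intro X Y Z
        rw [Finset.Nat.antidiagonal_zero, Finset.sum_singleton]
        show circProd n (φ 0) (φ 0) X Y Z = 0
        rw [hph0]
        have hA := hμ₀.2.2.2.2
        simp only [circProd, hA (μ₀ X Y) Z, hA (μ₀ Y Z) X, hA (μ₀ Z X) Y]
        linear_combination -hμ₀jac X Y Z
    · constructor
      · rw [hph1]; exact hφ₁
      · intro X Y Z
        have had1 : Finset.HasAntidiagonal.antidiagonal 1 = {((0:ℕ),(1:ℕ)), (1,0)} := by decide
        rw [had1, Finset.sum_insert (by decide), Finset.sum_singleton]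
        show circProd n (φ 0) (φ 1) X Y Z + circProd n (φ 1) (φ 0) X Y Z = 0
        rw [hph0, hph1]
        have h := hcocycle X Y Z
        simp only [delta2] at h
        exact h
    · -- the inductive step p = q + 2
      have hA : ∀ m, m < q+2 → IsAltBilinearMap n (φ m) := fun m hm => (ih m hm).1
      have hEq : ∀ m, m < q+2 → ∀ X Y Z,
          ∑ ij ∈ Finset.HasAntidiagonal.antidiagonal m, circProd n (φ ij.1) (φ ij.2) X Y Z = 0 :=
        fun m hm => (ih m hm).2
      have hd2 : ∀ j, 0 < j → j < q+2 → ∀ X Y Z,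
          circProd n μ₀ (φ j) X Y Z + circProd n (φ j) μ₀ X Y Z
            = -∑ ab ∈ Sd j, circProd n (φ ab.1) (φ ab.2) X Y Z := by
        intro j hj hjq X Y Z
        have h := hEq j hjq X Y Z
        rw [antidiagonal_split j hj, Finset.sum_insert (notmem_split1 j hj),
          Finset.sum_insert (notmem_split2 j)] at h
        have h' : circProd n (φ 0) (φ j) X Y Z + (circProd n (φ j) (φ 0) X Y Z
            + ∑ ab ∈ Sd j, circProd n (φ ab.1) (φ ab.2) X Y Z) = 0 := h
        rw [hph0] at h'
        linear_combination h'
      have hA0 : ∀ Y₁ Y₂ Y₃ Y₄ : Fin n → ℂ, (∑ ij ∈ Sd (q+2), delta3 n μ₀ (fun X Y Z => circProd n (φ ij.1) (φ ij.2) X Y Z) Y₁ Y₂ Y₃ Y₄) = 0 := by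
        intro Y₁ Y₂ Y₃ Y₄
        have hpair : ∀ ij ∈ Sd (q+2),
            delta3 n μ₀ (fun X Y Z => circProd n (φ ij.1) (φ ij.2) X Y Z) Y₁ Y₂ Y₃ Y₄ + delta3 n μ₀ (fun X Y Z => circProd n (φ ij.2) (φ ij.1) X Y Z) Y₁ Y₂ Y₃ Y₄
              = (∑ ab ∈ Sd ij.2, delta3 n (φ ij.1) (fun X Y Z => circProd n (φ ab.1) (φ ab.2) X Y Z) Y₁ Y₂ Y₃ Y₄) + ∑ ab ∈ Sd ij.1, delta3 n (φ ij.2) (fun X Y Z => circProd n (φ ab.1) (φ ab.2) X Y Z) Y₁ Y₂ Y₃ Y₄ := by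
          intro ij hij
          have hm := mem_Sd.mp hij
          have hi2 : ij.1 < q+2 := by omega
          have hj2 : ij.2 < q+2 := by omega
          have hb := bigJ hμ₀ (hA ij.1 hi2) (hA ij.2 hj2) Y₁ Y₂ Y₃ Y₄
          have h1 : delta3 n μ₀ (fun X Y Z => circProd n (φ ij.1) (φ ij.2) X Y Z
                + circProd n (φ ij.2) (φ ij.1) X Y Z) Y₁ Y₂ Y₃ Y₄
              = delta3 n μ₀ (fun X Y Z => circProd n (φ ij.1) (φ ij.2) X Y Z) Y₁ Y₂ Y₃ Y₄ + delta3 n μ₀ (fun X Y Z => circProd n (φ ij.2) (φ ij.1) X Y Z) Y₁ Y₂ Y₃ Y₄ :=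
            delta3_add hμ₀ _ _ Y₁ Y₂ Y₃ Y₄
          have h2a : delta3 n (φ ij.1) (fun X Y Z => circProd n (φ ij.2) μ₀ X Y Z
                + circProd n μ₀ (φ ij.2) X Y Z) Y₁ Y₂ Y₃ Y₄
              = delta3 n (φ ij.1) (fun X Y Z =>
                  -∑ ab ∈ Sd ij.2, circProd n (φ ab.1) (φ ab.2) X Y Z) Y₁ Y₂ Y₃ Y₄ :=
            delta3_ext (fun X Y Z => by linear_combination hd2 ij.2 (by omega) hj2 X Y Z)
              Y₁ Y₂ Y₃ Y₄
          have h2b : delta3 n (φ ij.1) (fun X Y Z =>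
                  -∑ ab ∈ Sd ij.2, circProd n (φ ab.1) (φ ab.2) X Y Z) Y₁ Y₂ Y₃ Y₄
              = -delta3 n (φ ij.1) (fun X Y Z =>
                  ∑ ab ∈ Sd ij.2, circProd n (φ ab.1) (φ ab.2) X Y Z) Y₁ Y₂ Y₃ Y₄ :=
            delta3_neg (hA ij.1 hi2) _ Y₁ Y₂ Y₃ Y₄
          have h2c : delta3 n (φ ij.1) (fun X Y Z =>
                  ∑ ab ∈ Sd ij.2, circProd n (φ ab.1) (φ ab.2) X Y Z) Y₁ Y₂ Y₃ Y₄
              = ∑ ab ∈ Sd ij.2, delta3 n (φ ij.1) (fun X Y Z => circProd n (φ ab.1) (φ ab.2) X Y Z) Y₁ Y₂ Y₃ Y₄ :=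
            delta3_sum (hA ij.1 hi2) _ _ Y₁ Y₂ Y₃ Y₄
          have h3a : delta3 n (φ ij.2) (fun X Y Z => circProd n μ₀ (φ ij.1) X Y Z
                + circProd n (φ ij.1) μ₀ X Y Z) Y₁ Y₂ Y₃ Y₄
              = delta3 n (φ ij.2) (fun X Y Z =>
                  -∑ ab ∈ Sd ij.1, circProd n (φ ab.1) (φ ab.2) X Y Z) Y₁ Y₂ Y₃ Y₄ :=
            delta3_ext (fun X Y Z => by linear_combination hd2 ij.1 (by omega) hi2 X Y Z)
              Y₁ Y₂ Y₃ Y₄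
          have h3b : delta3 n (φ ij.2) (fun X Y Z =>
                  -∑ ab ∈ Sd ij.1, circProd n (φ ab.1) (φ ab.2) X Y Z) Y₁ Y₂ Y₃ Y₄
              = -delta3 n (φ ij.2) (fun X Y Z =>
                  ∑ ab ∈ Sd ij.1, circProd n (φ ab.1) (φ ab.2) X Y Z) Y₁ Y₂ Y₃ Y₄ :=
            delta3_neg (hA ij.2 hj2) _ Y₁ Y₂ Y₃ Y₄
          have h3c : delta3 n (φ ij.2) (fun X Y Z =>
                  ∑ ab ∈ Sd ij.1, circProd n (φ ab.1) (φ ab.2) X Y Z) Y₁ Y₂ Y₃ Y₄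
              = ∑ ab ∈ Sd ij.1, delta3 n (φ ij.2) (fun X Y Z => circProd n (φ ab.1) (φ ab.2) X Y Z) Y₁ Y₂ Y₃ Y₄ :=
            delta3_sum (hA ij.2 hj2) _ _ Y₁ Y₂ Y₃ Y₄
          rw [h1, h2a, h2b, h2c, h3a, h3b, h3c] at hb
          linear_combination hb
        have hswap1 : (∑ ij ∈ Sd (q+2), delta3 n μ₀ (fun X Y Z => circProd n (φ ij.1) (φ ij.2) X Y Z) Y₁ Y₂ Y₃ Y₄) = ∑ ij ∈ Sd (q+2), delta3 n μ₀ (fun X Y Z => circProd n (φ ij.2) (φ ij.1) X Y Z) Y₁ Y₂ Y₃ Y₄ :=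
          sum_Sd_swap (q+2) (fun i j => delta3 n μ₀ (fun X Y Z => circProd n (φ i) (φ j) X Y Z) Y₁ Y₂ Y₃ Y₄)
        have hsum1 : (∑ ij ∈ Sd (q+2), (delta3 n μ₀ (fun X Y Z => circProd n (φ ij.1) (φ ij.2) X Y Z) Y₁ Y₂ Y₃ Y₄ + delta3 n μ₀ (fun X Y Z => circProd n (φ ij.2) (φ ij.1) X Y Z) Y₁ Y₂ Y₃ Y₄)) = (∑ ij ∈ Sd (q+2), delta3 n μ₀ (fun X Y Z => circProd n (φ ij.1) (φ ij.2) X Y Z) Y₁ Y₂ Y₃ Y₄) + (∑ ij ∈ Sd (q+2), delta3 n μ₀ (fun X Y Z => circProd n (φ ij.2) (φ ij.1) X Y Z) Y₁ Y₂ Y₃ Y₄) :=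
          Finset.sum_add_distrib
        have hcongr1 : (∑ ij ∈ Sd (q+2), (delta3 n μ₀ (fun X Y Z => circProd n (φ ij.1) (φ ij.2) X Y Z) Y₁ Y₂ Y₃ Y₄ + delta3 n μ₀ (fun X Y Z => circProd n (φ ij.2) (φ ij.1) X Y Z) Y₁ Y₂ Y₃ Y₄)) = ∑ ij ∈ Sd (q+2), ((∑ ab ∈ Sd ij.2, delta3 n (φ ij.1) (fun X Y Z => circProd n (φ ab.1) (φ ab.2) X Y Z) Y₁ Y₂ Y₃ Y₄) + ∑ ab ∈ Sd ij.1, delta3 n (φ ij.2) (fun X Y Z => circProd n (φ ab.1) (φ ab.2) X Y Z) Y₁ Y₂ Y₃ Y₄) :=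
          Finset.sum_congr rfl hpair
        have hsum2 : (∑ ij ∈ Sd (q+2), ((∑ ab ∈ Sd ij.2, delta3 n (φ ij.1) (fun X Y Z => circProd n (φ ab.1) (φ ab.2) X Y Z) Y₁ Y₂ Y₃ Y₄) + ∑ ab ∈ Sd ij.1, delta3 n (φ ij.2) (fun X Y Z => circProd n (φ ab.1) (φ ab.2) X Y Z) Y₁ Y₂ Y₃ Y₄)) = (∑ ij ∈ Sd (q+2), ∑ ab ∈ Sd ij.2, delta3 n (φ ij.1) (fun X Y Z => circProd n (φ ab.1) (φ ab.2) X Y Z) Y₁ Y₂ Y₃ Y₄) + (∑ ij ∈ Sd (q+2), ∑ ab ∈ Sd ij.1, delta3 n (φ ij.2) (fun X Y Z => circProd n (φ ab.1) (φ ab.2) X Y Z) Y₁ Y₂ Y₃ Y₄) :=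
          Finset.sum_add_distrib
        have hswap2 : (∑ ij ∈ Sd (q+2), ∑ ab ∈ Sd ij.1, delta3 n (φ ij.2) (fun X Y Z => circProd n (φ ab.1) (φ ab.2) X Y Z) Y₁ Y₂ Y₃ Y₄) = ∑ ij ∈ Sd (q+2), ∑ ab ∈ Sd ij.2, delta3 n (φ ij.1) (fun X Y Z => circProd n (φ ab.1) (φ ab.2) X Y Z) Y₁ Y₂ Y₃ Y₄ :=
          sum_Sd_swap (q+2) (fun x y => ∑ ab ∈ Sd x, delta3 n (φ y) (fun X Y Z => circProd n (φ ab.1) (φ ab.2) X Y Z) Y₁ Y₂ Y₃ Y₄)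
        have hflat : (∑ ij ∈ Sd (q+2), ∑ ab ∈ Sd ij.2, delta3 n (φ ij.1) (fun X Y Z => circProd n (φ ab.1) (φ ab.2) X Y Z) Y₁ Y₂ Y₃ Y₄) = ∑ t ∈ Td (q+2), delta3 n (φ t.1) (fun X Y Z => circProd n (φ t.2.1) (φ t.2.2) X Y Z) Y₁ Y₂ Y₃ Y₄ :=
          sum_Sd_sigma (q+2) (fun x a b => delta3 n (φ x) (fun X Y Z => circProd n (φ a) (φ b) X Y Z) Y₁ Y₂ Y₃ Y₄)
        have hswT : (∑ t ∈ Td (q+2), delta3 n (φ t.1) (fun X Y Z => circProd n (φ t.2.1) (φ t.2.2) X Y Z) Y₁ Y₂ Y₃ Y₄) = ∑ t ∈ Td (q+2), delta3 n (φ t.1) (fun X Y Z => circProd n (φ t.2.2) (φ t.2.1) X Y Z) Y₁ Y₂ Y₃ Y₄ :=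
          sum_Td_swap23 (q+2) (fun x a b => delta3 n (φ x) (fun X Y Z => circProd n (φ a) (φ b) X Y Z) Y₁ Y₂ Y₃ Y₄)
        have hsum3 : (∑ t ∈ Td (q+2), (delta3 n (φ t.1) (fun X Y Z => circProd n (φ t.2.1) (φ t.2.2) X Y Z) Y₁ Y₂ Y₃ Y₄ + delta3 n (φ t.1) (fun X Y Z => circProd n (φ t.2.2) (φ t.2.1) X Y Z) Y₁ Y₂ Y₃ Y₄)) = (∑ t ∈ Td (q+2), delta3 n (φ t.1) (fun X Y Z => circProd n (φ t.2.1) (φ t.2.2) X Y Z) Y₁ Y₂ Y₃ Y₄) + (∑ t ∈ Td (q+2), delta3 n (φ t.1) (fun X Y Z => circProd n (φ t.2.2) (φ t.2.1) X Y Z) Y₁ Y₂ Y₃ Y₄) :=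
          Finset.sum_add_distrib
        have hcongr2 : (∑ t ∈ Td (q+2), (delta3 n (φ t.1) (fun X Y Z => circProd n (φ t.2.1) (φ t.2.2) X Y Z) Y₁ Y₂ Y₃ Y₄ + delta3 n (φ t.1) (fun X Y Z => circProd n (φ t.2.2) (φ t.2.1) X Y Z) Y₁ Y₂ Y₃ Y₄)) = ∑ t ∈ Td (q+2), delta3 n (φ t.1) (fun X Y Z => circProd n (φ t.2.1) (φ t.2.2) X Y Z + circProd n (φ t.2.2) (φ t.2.1) X Y Z) Y₁ Y₂ Y₃ Y₄ :=
          Finset.sum_congr rfl (fun t ht => by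
            have hm := mem_Td.mp ht
            exact (delta3_add (hA t.1 (by omega)) _ _ Y₁ Y₂ Y₃ Y₄).symm)
        have hcyc1 : (∑ t ∈ Td (q+2), delta3 n (φ t.1) (fun X Y Z => circProd n (φ t.2.1) (φ t.2.2) X Y Z + circProd n (φ t.2.2) (φ t.2.1) X Y Z) Y₁ Y₂ Y₃ Y₄) = ∑ t ∈ Td (q+2), delta3 n (φ t.2.1) (fun X Y Z => circProd n (φ t.2.2) (φ t.1) X Y Z + circProd n (φ t.1) (φ t.2.2) X Y Z) Y₁ Y₂ Y₃ Y₄ :=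
          sum_Td_cyc (q+2) (fun x a b => delta3 n (φ x) (fun X Y Z => circProd n (φ a) (φ b) X Y Z + circProd n (φ b) (φ a) X Y Z) Y₁ Y₂ Y₃ Y₄)
        have hcyc2 : (∑ t ∈ Td (q+2), delta3 n (φ t.2.1) (fun X Y Z => circProd n (φ t.2.2) (φ t.1) X Y Z + circProd n (φ t.1) (φ t.2.2) X Y Z) Y₁ Y₂ Y₃ Y₄) = ∑ t ∈ Td (q+2), delta3 n (φ t.2.2) (fun X Y Z => circProd n (φ t.1) (φ t.2.1) X Y Z + circProd n (φ t.2.1) (φ t.1) X Y Z) Y₁ Y₂ Y₃ Y₄ :=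
          sum_Td_cyc (q+2) (fun x a b => delta3 n (φ a) (fun X Y Z => circProd n (φ b) (φ x) X Y Z + circProd n (φ x) (φ b) X Y Z) Y₁ Y₂ Y₃ Y₄)
        have hsum4 : (∑ t ∈ Td (q+2), (delta3 n (φ t.1) (fun X Y Z => circProd n (φ t.2.1) (φ t.2.2) X Y Z + circProd n (φ t.2.2) (φ t.2.1) X Y Z) Y₁ Y₂ Y₃ Y₄ + delta3 n (φ t.2.1) (fun X Y Z => circProd n (φ t.2.2) (φ t.1) X Y Z + circProd n (φ t.1) (φ t.2.2) X Y Z) Y₁ Y₂ Y₃ Y₄ + delta3 n (φ t.2.2) (fun X Y Z => circProd n (φ t.1) (φ t.2.1) X Y Z + circProd n (φ t.2.1) (φ t.1) X Y Z) Y₁ Y₂ Y₃ Y₄)) = (∑ t ∈ Td (q+2), delta3 n (φ t.1) (fun X Y Z => circProd n (φ t.2.1) (φ t.2.2) X Y Z + circProd n (φ t.2.2) (φ t.2.1) X Y Z) Y₁ Y₂ Y₃ Y₄) + (∑ t ∈ Td (q+2), delta3 n (φ t.2.1) (fun X Y Z => circProd n (φ t.2.2) (φ t.1) X Y Z + circProd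 n (φ t.1) (φ t.2.2) X Y Z) Y₁ Y₂ Y₃ Y₄) + (∑ t ∈ Td (q+2), delta3 n (φ t.2.2) (fun X Y Z => circProd n (φ t.1) (φ t.2.1) X Y Z + circProd n (φ t.2.1) (φ t.1) X Y Z) Y₁ Y₂ Y₃ Y₄) := by
          rw [Finset.sum_add_distrib, Finset.sum_add_distrib]
        have hJ : (∑ t ∈ Td (q+2), (delta3 n (φ t.1) (fun X Y Z => circProd n (φ t.2.1) (φ t.2.2) X Y Z + circProd n (φ t.2.2) (φ t.2.1) X Y Z) Y₁ Y₂ Y₃ Y₄ + delta3 n (φ t.2.1) (fun X Y Z => circProd n (φ t.2.2) (φ t.1) X Y Z + circProd n (φ t.1) (φ t.2.2) X Y Z) Y₁ Y₂ Y₃ Y₄ + delta3 n (φ t.2.2) (fun X Y Z => circProd n (φ t.1) (φ t.2.1) X Y Z + circProd n (φ t.2.1) (φ t.1) X Y Z) Y₁ Y₂ Y₃ Y₄)) = 0 :=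
          Finset.sum_eq_zero (fun t ht => by
            have hm := mem_Td.mp ht
            exact bigJ (hA t.1 (by omega)) (hA t.2.1 (by omega)) (hA t.2.2 (by omega))
              Y₁ Y₂ Y₃ Y₄)
        have hC3 : (∑ t ∈ Td (q+2), delta3 n (φ t.1) (fun X Y Z => circProd n (φ t.2.1) (φ t.2.2) X Y Z + circProd n (φ t.2.2) (φ t.2.1) X Y Z) Y₁ Y₂ Y₃ Y₄) + (∑ t ∈ Td (q+2), delta3 n (φ t.1) (fun X Y Z => circProd n (φ t.2.1) (φ t.2.2) X Y Z + circProd n (φ t.2.2) (φ t.2.1) X Y Z) Y₁ Y₂ Y₃ Y₄) + (∑ t ∈ Td (q+2), delta3 n (φ t.1) (fun X Y Z => circProd n (φ t.2.1) (φ t.2.2) X Y Z + circProd n (φ t.2.2) (φ t.2.1) X Y Z) Y₁ Y₂ Y₃ Y₄) = 0 := by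
          have h := hJ
          rw [hsum4, ← hcyc2, ← hcyc1] at h
          exact h
        have hC0 : (∑ t ∈ Td (q+2), delta3 n (φ t.1) (fun X Y Z => circProd n (φ t.2.1) (φ t.2.2) X Y Z + circProd n (φ t.2.2) (φ t.2.1) X Y Z) Y₁ Y₂ Y₃ Y₄) = 0 := three_cancel hC3
        have hAA : (∑ ij ∈ Sd (q+2), delta3 n μ₀ (fun X Y Z => circProd n (φ ij.1) (φ ij.2) X Y Z) Y₁ Y₂ Y₃ Y₄) + (∑ ij ∈ Sd (q+2), delta3 n μ₀ (fun X Y Z => circProd n (φ ij.1) (φ ij.2) X Y Z) Y₁ Y₂ Y₃ Y₄) = ∑ t ∈ Td (q+2), delta3 n (φ t.1) (fun X Y Z => circProd n (φ t.2.1) (φ t.2.2) X Y Z + circProd n (φ t.2.2) (φ t.2.1) X Y Z) Y₁ Y₂ Y₃ Y₄ := by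
          linear_combination hswap1 - hsum1 + hcongr1 + hsum2 + hswap2 + 2 * hflat
            + hswT - hsum3 + hcongr2
        exact two_cancel (by rw [hAA, hC0])
      have hAltPsi : IsAltTrilinearMap n (fun X Y Z =>
          -∑ ij ∈ Sd (q+2), circProd n (φ ij.1) (φ ij.2) X Y Z) := by
        refine altTri_neg (altTri_sum (Sd (q+2))
          (fun ij => fun X Y Z => circProd n (φ ij.1) (φ ij.2) X Y Z) ?_)
        intro ij hij
        have hm := mem_Sd.mp hij
        exact altTri_circProd (hA ij.1 (by omega)) (hA ij.2 (by omega))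
      have hCoPsi : ∀ Y₁ Y₂ Y₃ Y₄ : Fin n → ℂ, delta3 n μ₀ (fun X Y Z =>
          -∑ ij ∈ Sd (q+2), circProd n (φ ij.1) (φ ij.2) X Y Z) Y₁ Y₂ Y₃ Y₄ = 0 := by
        intro Y₁ Y₂ Y₃ Y₄
        have hn : delta3 n μ₀ (fun X Y Z =>
              -∑ ij ∈ Sd (q+2), circProd n (φ ij.1) (φ ij.2) X Y Z) Y₁ Y₂ Y₃ Y₄
            = -delta3 n μ₀ (fun X Y Z =>
              ∑ ij ∈ Sd (q+2), circProd n (φ ij.1) (φ ij.2) X Y Z) Y₁ Y₂ Y₃ Y₄ :=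
          delta3_neg hμ₀ _ Y₁ Y₂ Y₃ Y₄
        have hs : delta3 n μ₀ (fun X Y Z =>
              ∑ ij ∈ Sd (q+2), circProd n (φ ij.1) (φ ij.2) X Y Z) Y₁ Y₂ Y₃ Y₄
            = ∑ ij ∈ Sd (q+2), delta3 n μ₀ (fun X Y Z => circProd n (φ ij.1) (φ ij.2) X Y Z) Y₁ Y₂ Y₃ Y₄ :=
          delta3_sum hμ₀ _ _ Y₁ Y₂ Y₃ Y₄
        rw [hn, hs, hA0 Y₁ Y₂ Y₃ Y₄, neg_zero]
      have hfe : nextPsi n (seg n μ₀ φ₁ hH3 (q+1)) (q+2) = (fun X Y Z =>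
          -∑ ij ∈ Sd (q+2), circProd n (φ ij.1) (φ ij.2) X Y Z) := by
        funext X Y Z
        show -∑ ij ∈ Sd (q+2),
            circProd n (seg n μ₀ φ₁ hH3 (q+1) ij.1) (seg n μ₀ φ₁ hH3 (q+1) ij.2) X Y Z = _
        congr 1
        refine Finset.sum_congr rfl ?_
        intro ij hij
        have hm := mem_Sd.mp hij
        rw [seg_eval n μ₀ φ₁ hH3 (q+1) ij.1 (by omega),
          seg_eval n μ₀ φ₁ hH3 (q+1) ij.2 (by omega), ← hφdef]
      have hcond : IsAltTrilinearMap n (nextPsi n (seg n μ₀ φ₁ hH3 (q+1)) (q+2)) ∧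
          (∀ Y₁ Y₂ Y₃ Y₄, delta3 n μ₀ (nextPsi n (seg n μ₀ φ₁ hH3 (q+1)) (q+2))
            Y₁ Y₂ Y₃ Y₄ = 0) := by
        rw [hfe]; exact ⟨hAltPsi, hCoPsi⟩
      have hstep : φ (q+2) = (hH3 (nextPsi n (seg n μ₀ φ₁ hH3 (q+1)) (q+2))
          hcond.1 hcond.2).choose := by
        rw [hφdef, phiN_step n μ₀ φ₁ hH3 q, stepMap_eq n μ₀ hH3 _ _ hcond]
      have hspec := (hH3 (nextPsi n (seg n μ₀ φ₁ hH3 (q+1)) (q+2)) hcond.1 hcond.2).choose_spec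
      rw [← hstep] at hspec
      constructor
      · exact hspec.1
      · intro X Y Z
        have h2 := hspec.2 X Y Z
        rw [hfe] at h2
        have h2' : -∑ ij ∈ Sd (q+2), circProd n (φ ij.1) (φ ij.2) X Y Z
            = delta2 n μ₀ (φ (q+2)) X Y Z := h2
        simp only [delta2] at h2'
        rw [antidiagonal_split (q+2) (by omega),
          Finset.sum_insert (notmem_split1 (q+2) (by omega)),
          Finset.sum_insert (notmem_split2 (q+2))]
        show circProd n (φ 0) (φ (q+2)) X Y Z + (circProd n (φ (q+2)) (φ 0) X Y Z
            + ∑ ij ∈ Sd (q+2), circProd n (φ ij.1) (φ ij.2) X Y Z) = 0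
        rw [hph0]
        linear_combination -h2'
  exact ⟨φ, hph0, hph1, fun p => (key p).1, fun p => (key p).2⟩
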